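/- Let N ∈ ℝ³ with ‖N‖ = 1 and let c ∈ ℝ³ satisfy c ×₃ N ≠ 0. Then there exists ε₀ > 0 such that for every ε with 0 < ε < ε₀, there is NO pair (u, ξ) ∈ ℝ × ℝ³ with u² + ‖ξ‖² = 1 satisfying both ‖unit ξ − N‖ ≤ ε and ‖unit(u • c − ξ) − N‖ ≤ ε. (This is the vanishing statement over the hidden and anomalous faces of Cnf[𝒦,ℝ³;3,1]: for sufficiently localized bump forms, the image of the extended Gauss map on such a face misses the support of the product form η_N × η_N, because the first two Gauss directions become nearly antipodal whenever the collision parameter u is small.) -/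

import Mathlib

open Filter Topology

noncomputable section

abbrev R3 := EuclideanSpace ℝ (Fin 3)

/-- Normalization of a vector, with the convention `unit 0 = 0`. -/
def unit (v : R3) : R3 := ‖v‖⁻¹ • v

/-- The cross product on `ℝ³ = EuclideanSpace ℝ (Fin 3)`. -/
def cross3 (v w : R3) : R3 :=
  (WithLp.equiv 2 (Fin 3 → ℝ)).symm
    (crossProduct ((WithLp.equiv 2 (Fin 3 → ℝ)) v) ((WithLp.equiv 2 (Fin 3 → ℝ)) w))

infixl:74 " ×₃ " => cross3

lemma cross3_add_left (x y b : R3) : (x + y) ×₃ b = x ×₃ b + y ×₃ b := by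
  simp [cross3, WithLp.ofLp_add, WithLp.toLp_add, map_add, LinearMap.add_apply]

lemma cross3_smul_left (t : ℝ) (x b : R3) : (t • x) ×₃ b = t • (x ×₃ b) := by
  simp [cross3, WithLp.ofLp_smul, WithLp.toLp_smul, map_smul, LinearMap.smul_apply]

lemma cross3_self (v : R3) : v ×₃ v = 0 := by
  simp [cross3, cross_self]

lemma abs_apply_le_norm (a : R3) (i : Fin 3) : |a i| ≤ ‖a‖ := by
  rw [EuclideanSpace.norm_eq]
  have h1 : |a i| = Real.sqrt (‖a i‖ ^ 2) := by
    rw [Real.sqrt_sq_eq_abs]; simp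
  rw [h1]
  apply Real.sqrt_le_sqrt
  exact Finset.single_le_sum (f := fun j => ‖a j‖ ^ 2) (fun j _ => by positivity) (Finset.mem_univ i)

lemma norm_cross3_le (a b : R3) : ‖a ×₃ b‖ ≤ 4 * ‖a‖ * ‖b‖ := by
  have key : ∀ (j k : Fin 3), |a j * b k - a k * b j| ≤ 2 * ‖a‖ * ‖b‖ := by
    intro j k
    have h1 := abs_apply_le_norm a j
    have h2 := abs_apply_le_norm a k
    have h3 := abs_apply_le_norm b j
    have h4 := abs_apply_le_norm b k
    have hna : (0:ℝ) ≤ ‖a‖ := norm_nonneg _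
    have hnb : (0:ℝ) ≤ ‖b‖ := norm_nonneg _
    calc |a j * b k - a k * b j| ≤ |a j * b k| + |a k * b j| := abs_sub _ _
      _ = |a j| * |b k| + |a k| * |b j| := by rw [abs_mul, abs_mul]
      _ ≤ ‖a‖ * ‖b‖ + ‖a‖ * ‖b‖ :=
          add_le_add (mul_le_mul h1 h4 (abs_nonneg _) hna) (mul_le_mul h2 h3 (abs_nonneg _) hna)
      _ = 2 * ‖a‖ * ‖b‖ := by ring
  have h0 : ∀ i, |(a ×₃ b) i| ≤ 2 * ‖a‖ * ‖b‖ := by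
    intro i
    fin_cases i
    · simpa [cross3, cross_apply, WithLp.equiv_symm_apply, WithLp.equiv_apply] using key 1 2
    · have := key 2 0
      simpa [cross3, cross_apply, WithLp.equiv_symm_apply, WithLp.equiv_apply] using this
    · simpa [cross3, cross_apply, WithLp.equiv_symm_apply, WithLp.equiv_apply] using key 0 1
  have hnn : (0:ℝ) ≤ 2 * ‖a‖ * ‖b‖ := by positivity
  calc ‖a ×₃ b‖ = Real.sqrt (∑ i, ‖(a ×₃ b) i‖ ^ 2) := EuclideanSpace.norm_eq _
    _ ≤ Real.sqrt (3 * (2 * ‖a‖ * ‖b‖) ^ 2) := by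
        apply Real.sqrt_le_sqrt
        have : ∀ i : Fin 3, ‖(a ×₃ b) i‖ ^ 2 ≤ (2 * ‖a‖ * ‖b‖) ^ 2 := by
          intro i
          have := h0 i
          rw [Real.norm_eq_abs]
          nlinarith [abs_nonneg ((a ×₃ b) i)]
        calc ∑ i, ‖(a ×₃ b) i‖ ^ 2 ≤ ∑ _i : Fin 3, (2 * ‖a‖ * ‖b‖) ^ 2 :=
              Finset.sum_le_sum (fun i _ => this i)
          _ = 3 * (2 * ‖a‖ * ‖b‖) ^ 2 := by rw [Finset.sum_const, Finset.card_univ]; simp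
    _ ≤ Real.sqrt ((4 * ‖a‖ * ‖b‖) ^ 2) := by
        apply Real.sqrt_le_sqrt; nlinarith [norm_nonneg a, norm_nonneg b]
    _ = 4 * ‖a‖ * ‖b‖ := Real.sqrt_sq (by positivity)

open scoped RealInnerProductSpace in
/-- Vanishing over the hidden and anomalous faces of `Cnf[𝒦,ℝ³;3,1]`: if the
tangent direction `c` is not parallel to `N`, then for all sufficiently small
`ε > 0` no collision direction `(u, ξ)` on the unit sphere has both Gauss
directions in the `ε`-disk around `N`. -/
theorem no_collision_direction_in_support (N c : R3) (hN : ‖N‖ = 1)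
    (hc : c ×₃ N ≠ 0) :
    ∃ ε₀ > 0, ∀ ε : ℝ, 0 < ε → ε < ε₀ →
      ¬ ∃ (u : ℝ) (ξ : R3), u ^ 2 + ‖ξ‖ ^ 2 = 1 ∧
          ‖unit ξ - N‖ ≤ ε ∧ ‖unit (u • c - ξ) - N‖ ≤ ε := by
  have hK : 0 < ‖c ×₃ N‖ := norm_pos_iff.mpr hc
  refine ⟨min (1/2) (‖c ×₃ N‖ / (8 * ‖c‖ + 1)), lt_min (by norm_num) (by positivity), ?_⟩
  intro ε hε hεlt ⟨u, ξ, hsphere, h1, h2⟩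
  have hεhalf : ε < 1/2 := lt_of_lt_of_le hεlt (min_le_left _ _)
  have hεK : ε * (8 * ‖c‖ + 1) < ‖c ×₃ N‖ := by
    have := lt_of_lt_of_le hεlt (min_le_right _ _)
    have h8 : (0:ℝ) < 8 * ‖c‖ + 1 := by positivity
    rw [lt_div_iff₀ h8] at this
    exact this
  -- ξ ≠ 0 and u•c - ξ ≠ 0
  have hξ0 : ξ ≠ 0 := by
    intro h
    rw [h] at h1
    simp [unit, hN] at h1
    linarith
  have hη0 : u • c - ξ ≠ 0 := by
    intro h
    rw [h] at h2
    simp [unit, hN] at h2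
    linarith
  set r := ‖ξ‖ with hr_def
  set s := ‖u • c - ξ‖ with hs_def
  have hr : 0 < r := norm_pos_iff.mpr hξ0
  have hs : 0 < s := norm_pos_iff.mpr hη0
  set e₁ := unit ξ - N with he1_def
  set e₂ := unit (u • c - ξ) - N with he2_def
  have hne1 : ‖e₁‖ ≤ ε := h1
  have hne2 : ‖e₂‖ ≤ ε := h2
  have hξeq : ξ = r • (N + e₁) := by
    have : N + e₁ = unit ξ := by rw [he1_def]; abel
    rw [this, unit, smul_smul, mul_inv_cancel₀ hr.ne', one_smul]
  have hηeq : u • c - ξ = s • (N + e₂) := by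
    have : N + e₂ = unit (u • c - ξ) := by rw [he2_def]; abel
    rw [this, unit, smul_smul, mul_inv_cancel₀ hs.ne', one_smul]
  have hsum : u • c = r • (N + e₁) + s • (N + e₂) := by
    rw [← hξeq, ← hηeq]; abel
  -- inner products with N
  have hNN : (inner ℝ N N : ℝ) = 1 := by
    rw [real_inner_self_eq_norm_sq, hN]; norm_num
  have hinner : u * (inner ℝ c N : ℝ) = r * (1 + (inner ℝ e₁ N : ℝ)) + s * (1 + (inner ℝ e₂ N : ℝ)) := by
    have h' := congrArg (fun x : R3 => (inner ℝ x N : ℝ)) hsum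
    simp only [inner_add_left, real_inner_smul_left, hNN] at h'
    linarith [h']
  have hi1 : |(inner ℝ e₁ N : ℝ)| ≤ ε := by
    calc |(inner ℝ e₁ N : ℝ)| ≤ ‖e₁‖ * ‖N‖ := abs_real_inner_le_norm _ _
      _ = ‖e₁‖ := by rw [hN, mul_one]
      _ ≤ ε := hne1
  have hi2 : |(inner ℝ e₂ N : ℝ)| ≤ ε := by
    calc |(inner ℝ e₂ N : ℝ)| ≤ ‖e₂‖ * ‖N‖ := abs_real_inner_le_norm _ _
      _ = ‖e₂‖ := by rw [hN, mul_one]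
      _ ≤ ε := hne2
  have habs1 := abs_le.mp hi1
  have habs2 := abs_le.mp hi2
  have hlow : (r + s) / 2 ≤ u * (inner ℝ c N : ℝ) := by
    rw [hinner]; nlinarith
  have hupper : u * (inner ℝ c N : ℝ) ≤ |u| * ‖c‖ := by
    calc u * (inner ℝ c N : ℝ) ≤ |u * (inner ℝ c N : ℝ)| := le_abs_self _
      _ = |u| * |(inner ℝ c N : ℝ)| := abs_mul _ _
      _ ≤ |u| * (‖c‖ * ‖N‖) := by
          exact mul_le_mul_of_nonneg_left (abs_real_inner_le_norm _ _) (abs_nonneg _)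
      _ = |u| * ‖c‖ := by rw [hN, mul_one]
  have hrs_le : r + s ≤ 2 * (|u| * ‖c‖) := by linarith
  have hu_pos : 0 < |u| := by
    rcases eq_or_ne u 0 with h | h
    · exfalso
      rw [h, zero_mul] at hlow
      linarith
    · exact abs_pos.mpr h
  -- cross product with N
  have hcr : u • (c ×₃ N) = r • (e₁ ×₃ N) + s • (e₂ ×₃ N) := by
    have := congrArg (fun x : R3 => x ×₃ N) hsum
    simpa [cross3_smul_left, cross3_add_left, cross3_self, smul_add] using this
  have hcrnorm : |u| * ‖c ×₃ N‖ ≤ 4 * ε * (r + s) := by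
    have hL : ‖u • (c ×₃ N)‖ = |u| * ‖c ×₃ N‖ := by
      rw [norm_smul, Real.norm_eq_abs]
    have hR : ‖r • (e₁ ×₃ N) + s • (e₂ ×₃ N)‖ ≤ 4 * ε * (r + s) := by
      have b1 : ‖e₁ ×₃ N‖ ≤ 4 * ε := by
        calc ‖e₁ ×₃ N‖ ≤ 4 * ‖e₁‖ * ‖N‖ := norm_cross3_le _ _
          _ = 4 * ‖e₁‖ := by rw [hN, mul_one]
          _ ≤ 4 * ε := by linarith
      have b2 : ‖e₂ ×₃ N‖ ≤ 4 * ε := by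
        calc ‖e₂ ×₃ N‖ ≤ 4 * ‖e₂‖ * ‖N‖ := norm_cross3_le _ _
          _ = 4 * ‖e₂‖ := by rw [hN, mul_one]
          _ ≤ 4 * ε := by linarith
      calc ‖r • (e₁ ×₃ N) + s • (e₂ ×₃ N)‖
          ≤ ‖r • (e₁ ×₃ N)‖ + ‖s • (e₂ ×₃ N)‖ := norm_add_le _ _
        _ = r * ‖e₁ ×₃ N‖ + s * ‖e₂ ×₃ N‖ := by
            rw [norm_smul, norm_smul, Real.norm_eq_abs, Real.norm_eq_abs,
              abs_of_pos hr, abs_of_pos hs]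
        _ ≤ r * (4 * ε) + s * (4 * ε) := by
            exact add_le_add (mul_le_mul_of_nonneg_left b1 hr.le)
              (mul_le_mul_of_nonneg_left b2 hs.le)
        _ = 4 * ε * (r + s) := by ring
    rw [← hL, hcr]
    exact hR
  -- combine
  have hfinal : |u| * ‖c ×₃ N‖ ≤ 8 * ε * (|u| * ‖c‖) := by
    calc |u| * ‖c ×₃ N‖ ≤ 4 * ε * (r + s) := hcrnorm
      _ ≤ 4 * ε * (2 * (|u| * ‖c‖)) := by
          exact mul_le_mul_of_nonneg_left hrs_le (by positivity)
      _ = 8 * ε * (|u| * ‖c‖) := by ring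
  have hle : ‖c ×₃ N‖ ≤ 8 * ε * ‖c‖ := by
    have h2' : |u| * ‖c ×₃ N‖ ≤ |u| * (8 * ε * ‖c‖) := by
      have heq : 8 * ε * (|u| * ‖c‖) = |u| * (8 * ε * ‖c‖) := by ring
      linarith [hfinal]
    exact le_of_mul_le_mul_left h2' hu_pos
  have hlt : 8 * ε * ‖c‖ < ε * (8 * ‖c‖ + 1) := by
    have : ε * (8 * ‖c‖ + 1) = 8 * ε * ‖c‖ + ε := by ring
    linarith
  linarith

end
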